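/- In the formal double zeta space D_{11}, the relation 14 Z_{3,8} + 10 Z_{5,6} - 21 Z_{7,4} = -(3/2) Z_{11} holds; that is, this relation is a consequence of the double shuffle relations Z_{r,s}+Z_{s,r}+Z_{11} = \sum_{h+p=11} (binom(p-1,r-1)+binom(p-1,s-1)) Z_{h,p} for r+s=11, r,s \ge 1. -/
import Mathlib


/-- In the formal double zeta space `D₁₁`: in any realization `Z, Zk` of the double
shuffle relations in weight 11, `14 Z_{3,8} + 10 Z_{5,6} - 21 Z_{7,4} = -(3/2) Z_{11}`. -/
theorem relation_weight_eleven
    (Z : ℕ → ℕ → ℚ) (Zk : ℚ)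
    (hrel : ∀ r s : ℕ, 1 ≤ r → 1 ≤ s → r + s = 11 →
      Z r s + Z s r + Zk =
        ∑ p ∈ Finset.Icc 1 10,
          ((Nat.choose (p - 1) (r - 1) + Nat.choose (p - 1) (s - 1) : ℕ) : ℚ) * Z (11 - p) p) :
    14 * Z 3 8 + 10 * Z 5 6 - 21 * Z 7 4 = -(3 / 2) * Zk := by
  have h3 := hrel 3 8 (by norm_num) (by norm_num) (by norm_num)
  have h4 := hrel 4 7 (by norm_num) (by norm_num) (by norm_num)
  have h5 := hrel 5 6 (by norm_num) (by norm_num) (by norm_num)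
  simp only [show Finset.Icc 1 10 = ({1,2,3,4,5,6,7,8,9,10} : Finset ℕ) by decide,
    Finset.sum_insert, Finset.mem_insert, Finset.sum_singleton] at h3 h4 h5
  norm_num [Finset.sum_insert, Finset.mem_insert, Nat.choose] at h3 h4 h5
  linarith
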